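/- (Converse to the Roberts decomposition, power gauge.) Fix 0 < α < 1. Let μ be a finite positive Borel measure on ∂𝔻 and suppose there exists a constant C > 0 such that for every integer j₀ ≥ 0 one can write μ = Σ_{j=1}^∞ μ_j as a countable sum of positive measures with μ_j(I) ≤ C·|I|^α for every dyadic arc I of generation j + j₀. Then μ does not charge α-Beurling–Carleson sets: μ(E) = 0 for every α-Beurling–Carleson set E. -/

import Mathlib

open MeasureTheory Set Complex Filter
open scoped ENNReal NNReal Topology

noncomputable section

/-- The unit circle `∂𝔻 = {z : |z| = 1}` in the complex plane. -/
def unitCircle : Set ℂ := Metric.sphere 0 1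

/-- Arclength measure on the unit circle, the pushforward of Lebesgue measure on
`[0, 2π)` under `θ ↦ e^{iθ}`. -/
def arcMeasure : Measure ℂ :=
  Measure.map (circleMap 0 1) (volume.restrict (Set.Ico (0:ℝ) (2*Real.pi)))

/-- Arclength of a subset of the unit circle. -/
def arcLen (A : Set ℂ) : ℝ := (arcMeasure A).toReal

/-- The complementary arcs of a set `E ⊆ ∂𝔻`: the connected components of `∂𝔻 \ E`. -/
def complArcs (E : Set ℂ) : Set (Set ℂ) :=
  {J | ∃ x ∈ unitCircle \ E, J = connectedComponentIn (unitCircle \ E) x}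

/-- A Beurling–Carleson set: a closed subset of the unit circle of zero arclength whose
complementary arcs `J` satisfy `Σ |J| log(1/|J|) < ∞`. -/
def IsBeurlingCarleson (E : Set ℂ) : Prop :=
  IsClosed E ∧ E ⊆ unitCircle ∧ arcMeasure E = 0 ∧
    Summable (fun J : complArcs E => arcLen (J : Set ℂ) * Real.log (1 / arcLen (J : Set ℂ)))

/-- An `α`-Beurling–Carleson set: a closed subset of the unit circle of zero arclength whose
complementary arcs `J` satisfy `Σ |J|^α < ∞`. -/
def IsAlphaBeurlingCarleson (α : ℝ) (E : Set ℂ) : Prop :=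
  IsClosed E ∧ E ⊆ unitCircle ∧ arcMeasure E = 0 ∧
    Summable (fun J : complArcs E => arcLen (J : Set ℂ) ^ α)

/-- The Poisson integral of a measure `μ` on the unit circle. -/
def poisson (μ : Measure ℂ) (z : ℂ) : ℝ :=
  ∫ ζ, (1 - ‖z‖ ^ 2) / ‖ζ - z‖ ^ 2 ∂μ

/-- The singular inner function `S_μ(z) = exp(−∫ (ζ+z)/(ζ−z) dμ(ζ))`. -/
def singularInner (μ : Measure ℂ) (z : ℂ) : ℂ :=
  Complex.exp (-∫ ζ, (ζ + z) / (ζ - z) ∂μ)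

/-- Membership in the Nevanlinna class: `sup_{0<r<1} ∫_0^{2π} log⁺|f(re^{iθ})| dθ < ∞`. -/
def InNevanlinna (f : ℂ → ℂ) : Prop :=
  ∃ C : ℝ, ∀ r ∈ Set.Ioo (0:ℝ) 1,
    (∫⁻ θ in Set.Ioc (0:ℝ) (2*Real.pi),
      ENNReal.ofReal (Real.log ‖f (circleMap 0 r θ)‖)) ≤ ENNReal.ofReal C

/-- Membership in the Hardy space `H^p`: `sup_{0<r<1} ∫_0^{2π} |f(re^{iθ})|^p dθ < ∞`. -/
def InHardy (p : ℝ) (f : ℂ → ℂ) : Prop :=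
  ∃ C : ℝ, ∀ r ∈ Set.Ioo (0:ℝ) 1,
    (∫⁻ θ in Set.Ioc (0:ℝ) (2*Real.pi),
      ENNReal.ofReal (‖f (circleMap 0 r θ)‖ ^ p)) ≤ ENNReal.ofReal C

/-- The dyadic arc of generation `n`, index `k`:
`{e^{iθ} : 2πk/2^n ≤ θ < 2π(k+1)/2^n}`. -/
def dyadicArc (n k : ℕ) : Set ℂ :=
  circleMap 0 1 '' Set.Ico (2*Real.pi*k/2^n) (2*Real.pi*(k+1)/2^n)

/-- The Stolz angle of opening `π/2` with vertex `ζ ∈ ∂𝔻`. -/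
def stolz (ζ : ℂ) : Set ℂ :=
  {z : ℂ | ‖z‖ < 1 ∧ ‖z - ζ‖ < Real.sqrt 2 * (1 - ‖z‖)}

/-- The Privalov star of a set `E ⊆ ∂𝔻`: the union of the Stolz angles of opening `π/2`
emanating from points of `E`. -/
def privalovStar (E : Set ℂ) : Set ℂ := ⋃ ζ ∈ E, stolz ζ

/-- The closed arc of the unit circle centered at `x ∈ ∂𝔻` of arclength `2ε`. -/
def arcAround (x : ℂ) (ε : ℝ) : Set ℂ :=
  (fun θ : ℝ => x * Complex.exp (θ * Complex.I)) '' Set.Icc (-ε) ε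

/-- A (half-open) arc of the unit circle. -/
def IsCircleArc (I : Set ℂ) : Prop :=
  ∃ a b : ℝ, a ≤ b ∧ I = circleMap 0 1 '' Set.Ioc a b

/-- `m` is the midpoint of the arc `J` of the unit circle: `m ∈ ∂𝔻` and `J` is contained in
the closed arc centered at `m` of the same arclength as `J`. -/
def IsArcCenter (J : Set ℂ) (m : ℂ) : Prop :=
  m ∈ unitCircle ∧ J ⊆ arcAround m (arcLen J / 2)

/-- The Stolz angle of opening `θ` with vertex `ζ ∈ ∂𝔻`. -/
def stolzAngle (θ : ℝ) (ζ : ℂ) : Set ℂ :=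
  {z : ℂ | ‖z‖ < 1 ∧ ‖z - ζ‖ < (1 - ‖z‖) / Real.cos (θ/2)}

/-- The Privalov star of aperture `θ` of a closed set `F ⊆ ∂𝔻`. -/
def privalovStarA (F : Set ℂ) (θ : ℝ) : Set ℂ := ⋃ ζ ∈ F, stolzAngle θ ζ

/-- `∫_{K_{F,θ} ∩ ∂𝔻_ρ} P_μ(w) |dw|`: the integral of the Poisson extension of `μ` over the
part of the circle of radius `ρ` lying inside the Privalov star `K_{F,θ}`, with respect to
arclength on that circle. -/
def starIntegral (μ : Measure ℂ) (F : Set ℂ) (θ ρ : ℝ) : ℝ≥0∞ :=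
  ∫⁻ t in Set.Ico (0:ℝ) (2*Real.pi),
    Set.indicator (privalovStarA F θ)
      (fun w => ENNReal.ofReal (poisson μ w)) (circleMap 0 ρ t) * ENNReal.ofReal ρ


namespace S9
open scoped Classical

noncomputable section

lemma two_pi_pos : (0:ℝ) < 2 * Real.pi := by positivity

lemma cm_exp (θ : ℝ) : circleMap 0 1 θ = Complex.exp (θ * Complex.I) := by
  simp [circleMap]

lemma cm_mem (θ : ℝ) : circleMap 0 1 θ ∈ unitCircle := by
  simpa [unitCircle] using circleMap_mem_sphere (0:ℂ) zero_le_one θ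

lemma cm_abs (θ : ℝ) : ‖circleMap 0 1 θ‖ = 1 := by
  have := cm_mem θ
  simpa [unitCircle, Complex.dist_eq] using this

lemma cm_ne_zero (θ : ℝ) : circleMap 0 1 θ ≠ 0 := by
  intro h
  have := cm_abs θ
  rw [h] at this
  simp at this

lemma cm_eq_iff {s t : ℝ} :
    circleMap 0 1 s = circleMap 0 1 t ↔ ∃ m : ℤ, s = t + 2 * Real.pi * m := by
  rw [cm_exp, cm_exp, Complex.exp_eq_exp_iff_exists_int]
  constructor
  · rintro ⟨m, hm⟩
    refine ⟨m, ?_⟩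
    have h2 : (s:ℂ) * Complex.I = ((t + 2*Real.pi*m : ℝ) : ℂ) * Complex.I := by
      rw [hm]; push_cast; ring
    have h3 := mul_right_cancel₀ Complex.I_ne_zero h2
    exact_mod_cast h3
  · rintro ⟨m, rfl⟩
    exact ⟨m, by push_cast; ring⟩

lemma cm_per (m : ℤ) (x : ℝ) : circleMap 0 1 (x + 2*Real.pi*m) = circleMap 0 1 x :=
  cm_eq_iff.mpr ⟨m, rfl⟩

lemma exists_arg {z : ℂ} (hz : z ∈ unitCircle) :
    ∃ θ ∈ Set.Ico 0 (2*Real.pi), circleMap 0 1 θ = z := by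
  have habs : ‖z‖ = 1 := by simpa [unitCircle, Complex.dist_eq] using hz
  have hz' : circleMap 0 1 z.arg = z := by
    rw [cm_exp, Complex.exp_mul_I]
    have h := Complex.norm_mul_cos_add_sin_mul_I z
    rw [habs] at h
    simpa using h
  have harg := Complex.arg_mem_Ioc z
  have hpi := Real.pi_pos
  rcases le_or_gt 0 z.arg with h | h
  · exact ⟨z.arg, ⟨h, lt_of_le_of_lt harg.2 (by linarith)⟩, hz'⟩
  · refine ⟨z.arg + 2*Real.pi, ⟨by linarith [harg.1], by linarith⟩, ?_⟩
    have : z.arg + 2*Real.pi = z.arg + 2*Real.pi*(1:ℤ) := by push_cast; ring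
    rw [this, cm_per]
    exact hz'

lemma arc_open_small (t₀ δ : ℝ) (h0 : 0 < δ) (hδ : δ < Real.pi) :
    ∃ V : Set ℂ, IsOpen V ∧ unitCircle ∩ V = circleMap 0 1 '' Set.Ioo (t₀ - δ) (t₀ + δ) := by
  set c := circleMap 0 1 t₀ with hc
  have hcne : c ≠ 0 := cm_ne_zero t₀
  refine ⟨{z | z ≠ 0 ∧ (z / c).arg ∈ Set.Ioo (-δ) δ}, ?_, ?_⟩
  · rw [isOpen_iff_mem_nhds]
    rintro z ⟨hz0, hzarg⟩
    have hslit : z / c ∈ Complex.slitPlane := by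
      rw [Complex.mem_slitPlane_iff]
      by_contra h
      push_neg at h
      have hne : z / c ≠ 0 := div_ne_zero hz0 hcne
      rcases lt_or_eq_of_le h.1 with hlt | heq
      · have harg : (z/c).arg = Real.pi := Complex.arg_eq_pi_iff.mpr ⟨hlt, h.2⟩
        rw [harg] at hzarg
        exact absurd hzarg.2 (by linarith)
      · exact hne (Complex.ext (by simpa using heq) (by simpa using h.2))
    have hdivc : ContinuousAt (fun w : ℂ => w / c) z := continuousAt_id.div_const c
    have hcont : ContinuousAt (fun w : ℂ => (w / c).arg) z :=
      ContinuousAt.comp (x := z) (f := fun w : ℂ => w / c) (Complex.continuousAt_arg hslit) hdivc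
    have h1 : (fun w : ℂ => (w/c).arg) ⁻¹' Set.Ioo (-δ) δ ∈ nhds z :=
      hcont.preimage_mem_nhds (Ioo_mem_nhds hzarg.1 hzarg.2)
    have h2 : {w : ℂ | w ≠ 0} ∈ nhds z := (isOpen_ne).mem_nhds hz0
    filter_upwards [h1, h2] with w hw1 hw2
    exact ⟨hw2, hw1⟩
  · ext z
    constructor
    · rintro ⟨hzc, hz0, harg⟩
      have habs : ‖z / c‖ = 1 := by
        have h1 : ‖z‖ = 1 := by simpa [unitCircle, Complex.dist_eq] using hzc
        simp [map_div₀, h1, hc, cm_abs]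
      have hw : z / c = circleMap 0 1 ((z/c).arg) := by
        rw [cm_exp, Complex.exp_mul_I]
        have h := Complex.norm_mul_cos_add_sin_mul_I (z/c)
        rw [habs] at h
        simpa using h.symm
      refine ⟨t₀ + (z/c).arg, ⟨by linarith [harg.1], by linarith [harg.2]⟩, ?_⟩
      have h3 : circleMap 0 1 (t₀ + (z/c).arg) = c * (z / c) := by
        conv_rhs => rw [hw]
        rw [hc, cm_exp, cm_exp, cm_exp, ← Complex.exp_add]
        congr 1
        push_cast
        ring
      rw [h3, mul_div_cancel₀ z hcne]
    · rintro ⟨t, ht, rfl⟩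
      obtain ⟨ht1, ht2⟩ := ht
      have h1 : circleMap 0 1 t / c = circleMap 0 1 (t - t₀) := by
        rw [hc, cm_exp, cm_exp, cm_exp, ← Complex.exp_sub]
        congr 1
        push_cast
        ring
      refine ⟨cm_mem t, cm_ne_zero t, ?_⟩
      rw [h1]
      have harg : (circleMap 0 1 (t - t₀)).arg = t - t₀ := by
        rw [cm_exp, Complex.exp_mul_I]
        exact Complex.arg_cos_add_sin_mul_I ⟨by linarith, by linarith⟩
      rw [harg]
      exact ⟨by linarith, by linarith⟩

lemma arc_open (a b : ℝ) :
    ∃ V : Set ℂ, IsOpen V ∧ unitCircle ∩ V = circleMap 0 1 '' Set.Ioo a b := by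
  have hpi := Real.pi_gt_three
  set δ : Set.Ioo a b → ℝ := fun t => min (min (t.1 - a) (b - t.1)) 1 / 2 with hδ
  have hδpos : ∀ t : Set.Ioo a b, 0 < δ t := by
    rintro ⟨t, ht1, ht2⟩
    have h : (0:ℝ) < min (min (t - a) (b - t)) 1 :=
      lt_min (lt_min (by linarith) (by linarith)) one_pos
    show (0:ℝ) < ((t - a) ⊓ (b - t) ⊓ 1) / 2
    linarith
  have hδpi : ∀ t : Set.Ioo a b, δ t < Real.pi := by
    intro t
    have h1 : δ t ≤ 1/2 := by
      rw [hδ]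
      have := min_le_right (min (t.1 - a) (b - t.1)) 1
      linarith
    linarith
  have key : ∀ t : Set.Ioo a b, ∃ V : Set ℂ, IsOpen V ∧
      unitCircle ∩ V = circleMap 0 1 '' Set.Ioo (t.1 - δ t) (t.1 + δ t) :=
    fun t => arc_open_small t.1 (δ t) (hδpos t) (hδpi t)
  choose V hVo hVe using key
  refine ⟨⋃ t, V t, isOpen_iUnion hVo, ?_⟩
  rw [Set.inter_iUnion]
  have himg : ⋃ t : Set.Ioo a b, circleMap 0 1 '' Set.Ioo (t.1 - δ t) (t.1 + δ t)
      = circleMap 0 1 '' Set.Ioo a b := by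
    apply subset_antisymm
    · refine Set.iUnion_subset fun t => Set.image_mono ?_
      rintro x ⟨hx1, hx2⟩
      have h1 : δ t ≤ (t.1 - a) / 2 := by
        rw [hδ]
        have h2 := min_le_left (min (t.1 - a) (b - t.1)) 1
        have h3 := min_le_left (t.1 - a) (b - t.1)
        simp only
        linarith
      have h2 : δ t ≤ (b - t.1) / 2 := by
        rw [hδ]
        have h2 := min_le_left (min (t.1 - a) (b - t.1)) 1
        have h3 := min_le_right (t.1 - a) (b - t.1)
        simp only
        linarith
      exact ⟨by linarith, by linarith⟩
    · rintro _ ⟨t, ht, rfl⟩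
      refine Set.mem_iUnion.mpr ⟨⟨t, ht⟩, ⟨t, ⟨?_, ?_⟩, rfl⟩⟩
      · have := hδpos ⟨t, ht⟩
        simp only
        linarith
      · have := hδpos ⟨t, ht⟩
        simp only
        linarith
  rw [← himg]
  exact Set.iUnion_congr hVe

lemma meas_image (a b : ℝ) : MeasurableSet (circleMap 0 1 '' Set.Ioo a b) := by
  obtain ⟨V, hVo, hVe⟩ := arc_open a b
  rw [← hVe]
  exact (Metric.isClosed_sphere.measurableSet).inter hVo.measurableSet

lemma preimage_image_Ioo (a b : ℝ) :
    circleMap 0 1 ⁻¹' (circleMap 0 1 '' Set.Ioo a b)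
      = ⋃ m : ℤ, Set.Ioo (a + 2*Real.pi*m) (b + 2*Real.pi*m) := by
  ext t
  simp only [Set.mem_preimage, Set.mem_image, Set.mem_iUnion, Set.mem_Ioo]
  constructor
  · rintro ⟨x, ⟨hx1, hx2⟩, hxt⟩
    obtain ⟨m, hm⟩ := cm_eq_iff.mp hxt
    refine ⟨-m, ?_, ?_⟩ <;> · push_cast; linarith
  · rintro ⟨m, h1, h2⟩
    exact ⟨t - 2*Real.pi*m, ⟨by linarith, by linarith⟩,
      (cm_eq_iff.mpr ⟨-m, by push_cast; ring⟩)⟩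

lemma arcMeasure_image {a b : ℝ} (ha0 : 0 ≤ a) (ha2 : a < 2*Real.pi) (hab : a < b)
    (hb : b ≤ a + 2*Real.pi) :
    arcMeasure (circleMap 0 1 '' Set.Ioo a b) = ENNReal.ofReal (b - a) := by
  have hpi := Real.pi_pos
  have hmeas := meas_image a b
  have hpre : MeasurableSet (circleMap 0 1 ⁻¹' (circleMap 0 1 '' Set.Ioo a b)) :=
    (continuous_circleMap 0 1).measurable hmeas
  rw [arcMeasure, Measure.map_apply (continuous_circleMap 0 1).measurable hmeas,
      Measure.restrict_apply hpre, preimage_image_Ioo]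
  have hset : (⋃ m : ℤ, Set.Ioo (a + 2*Real.pi*m) (b + 2*Real.pi*m)) ∩ Set.Ico 0 (2*Real.pi)
      = Set.Ioo a (min b (2*Real.pi)) ∪ Set.Ico 0 (b - 2*Real.pi) := by
    ext t
    simp only [Set.mem_inter_iff, Set.mem_iUnion, Set.mem_Ioo, Set.mem_Ico, Set.mem_union]
    constructor
    · rintro ⟨⟨m, h1, h2⟩, h3, h4⟩
      have hm1 : (m:ℝ) < 1 := by nlinarith
      have hm2 : (-2:ℝ) < m := by nlinarith
      have hm1' : m < 1 := by exact_mod_cast hm1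
      have hm2' : (-2:ℤ) < m := by exact_mod_cast hm2
      have hm0 : m = 0 ∨ m = -1 := by omega
      rcases hm0 with rfl | rfl
      · left
        push_cast at h1 h2
        exact ⟨by linarith, lt_min (by linarith) h4⟩
      · right
        push_cast at h1 h2
        exact ⟨h3, by linarith⟩
    · rintro (⟨h1, h2⟩ | ⟨h1, h2⟩)
      · rcases lt_min_iff.mp h2 with ⟨h2a, h2b⟩
        exact ⟨⟨0, by push_cast; linarith, by push_cast; linarith⟩, by linarith, h2b⟩
      · exact ⟨⟨-1, by push_cast; linarith, by push_cast; linarith⟩, h1, by linarith⟩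
  rw [hset, measure_union ?disj measurableSet_Ico]
  case disj =>
    rw [Set.disjoint_left]
    rintro t ⟨ht1, _⟩ ⟨_, ht2⟩
    linarith
  rw [Real.volume_Ioo, Real.volume_Ico]
  rcases le_or_gt b (2*Real.pi) with h | h
  · rw [min_eq_left h, ENNReal.ofReal_eq_zero.mpr (by linarith : b - 2*Real.pi - 0 ≤ 0), add_zero]
  · rw [min_eq_right h.le, ← ENNReal.ofReal_add (by linarith) (by linarith)]
    ring_nf
lemma arcLen_image {a b : ℝ} (ha0 : 0 ≤ a) (ha2 : a < 2*Real.pi) (hab : a < b)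
    (hb : b ≤ a + 2*Real.pi) :
    arcLen (circleMap 0 1 '' Set.Ioo a b) = b - a := by
  rw [arcLen, arcMeasure_image ha0 ha2 hab hb, ENNReal.toReal_ofReal (by linarith)]
def Apre (E : Set ℂ) : Set ℝ := circleMap 0 1 ⁻¹' E

variable {E : Set ℂ}

lemma A_closed (hcl : IsClosed E) : IsClosed (Apre E) :=
  hcl.preimage (continuous_circleMap 0 1)

lemma A_per (m : ℤ) (x : ℝ) : x + 2*Real.pi*m ∈ Apre E ↔ x ∈ Apre E := by
  unfold Apre
  simp only [Set.mem_preimage, cm_per]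

lemma null_A (hcl : IsClosed E) (hnull : arcMeasure E = 0) :
    volume (Apre E ∩ Set.Ico 0 (2*Real.pi)) = 0 := by
  have h := hnull
  rw [arcMeasure, Measure.map_apply (continuous_circleMap 0 1).measurable hcl.measurableSet,
      Measure.restrict_apply ((continuous_circleMap 0 1).measurable hcl.measurableSet)] at h
  exact h

lemma exists_comp (hcl : IsClosed E) (hne : (Apre E).Nonempty) {x : ℝ} (hx : x ∉ Apre E) :
    ∃ a b : ℝ, a ∈ Apre E ∧ b ∈ Apre E ∧ a < x ∧ x < b ∧ ∀ t ∈ Set.Ioo a b, t ∉ Apre E := by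
  have hpi := two_pi_pos
  obtain ⟨θ₀, hθ₀⟩ := hne
  obtain ⟨mlo, hmlo⟩ := exists_int_lt ((x - θ₀)/(2*Real.pi))
  obtain ⟨mhi, hmhi⟩ := exists_int_gt ((x - θ₀)/(2*Real.pi))
  have hlo : θ₀ + 2*Real.pi*mlo ∈ Apre E ∩ Set.Iic x := by
    refine ⟨(A_per mlo θ₀).mpr hθ₀, ?_⟩
    have := (lt_div_iff₀ hpi).mp hmlo
    simp only [Set.mem_Iic]
    nlinarith
  have hhi : θ₀ + 2*Real.pi*mhi ∈ Apre E ∩ Set.Ici x := by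
    refine ⟨(A_per mhi θ₀).mpr hθ₀, ?_⟩
    have := (div_lt_iff₀ hpi).mp hmhi
    simp only [Set.mem_Ici]
    nlinarith
  have hAcl := A_closed hcl
  have hbddA : BddAbove (Apre E ∩ Set.Iic x) := ⟨x, fun y hy => hy.2⟩
  have hbddB : BddBelow (Apre E ∩ Set.Ici x) := ⟨x, fun y hy => hy.2⟩
  set a := sSup (Apre E ∩ Set.Iic x) with hadef
  set b := sInf (Apre E ∩ Set.Ici x) with hbdef
  have haA : a ∈ Apre E ∩ Set.Iic x :=
    IsClosed.csSup_mem (hAcl.inter isClosed_Iic) ⟨_, hlo⟩ hbddA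
  have hbA : b ∈ Apre E ∩ Set.Ici x :=
    IsClosed.csInf_mem (hAcl.inter isClosed_Ici) ⟨_, hhi⟩ hbddB
  refine ⟨a, b, haA.1, hbA.1, ?_, ?_, ?_⟩
  · have h1 : a ≤ x := haA.2
    rcases eq_or_lt_of_le h1 with h | h
    · rw [h] at haA
      exact absurd haA.1 hx
    · exact h
  · have h1 : x ≤ b := hbA.2
    rcases eq_or_lt_of_le h1 with h | h
    · rw [← h] at hbA
      exact absurd hbA.1 hx
    · exact h
  · rintro t ⟨ht1, ht2⟩ htA
    rcases le_or_gt t x with h | h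
    · have : t ≤ a := le_csSup hbddA ⟨htA, h⟩
      linarith
    · have : b ≤ t := csInf_le hbddB ⟨htA, h.le⟩
      linarith

lemma interval_eq {A : Set ℝ} {a b a' b' x : ℝ} (ha' : a' ∈ A) (hb' : b' ∈ A)
    (hI : ∀ t ∈ Set.Ioo a b, t ∉ A) (hI' : ∀ t ∈ Set.Ioo a' b', t ∉ A)
    (ha : a ∈ A) (hb : b ∈ A)
    (hx : x ∈ Set.Ioo a b) (hx' : x ∈ Set.Ioo a' b') : a = a' ∧ b = b' := by
  obtain ⟨hx1, hx2⟩ := hx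
  obtain ⟨hx1', hx2'⟩ := hx'
  constructor
  · rcases lt_trichotomy a a' with h | h | h
    · exact absurd ha' (hI a' ⟨h, by linarith⟩)
    · exact h
    · exact absurd ha (hI' a ⟨h, by linarith⟩)
  · rcases lt_trichotomy b b' with h | h | h
    · exact absurd hb (hI' b ⟨by linarith, h⟩)
    · exact h
    · exact absurd hb' (hI b' ⟨by linarith, h⟩)

/-- Normalized complementary intervals. -/
def SC (A : Set ℝ) : Set (ℝ × ℝ) :=
  {p | p.1 ∈ Set.Ico 0 (2*Real.pi) ∧ p.1 < p.2 ∧ p.1 ∈ A ∧ p.2 ∈ A ∧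
    ∀ t ∈ Set.Ioo p.1 p.2, t ∉ A}

lemma SC_len_le {p : ℝ × ℝ} (hp : p ∈ SC (Apre E)) : p.2 ≤ p.1 + 2*Real.pi := by
  by_contra h
  push_neg at h
  have h1 : p.1 + 2*Real.pi ∈ Apre E := by
    have := (A_per 1 p.1).mpr hp.2.2.1
    push_cast at this
    convert this using 2
    ring
  exact hp.2.2.2.2 _ ⟨by linarith [two_pi_pos], h⟩ h1

lemma SC_countable (A : Set ℝ) : Countable ↥(SC A) := by
  have hex : ∀ p : SC A, ∃ q : ℚ, (q:ℝ) ∈ Set.Ioo p.1.1 p.1.2 := by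
    rintro ⟨p, hp⟩
    obtain ⟨q, hq1, hq2⟩ := exists_rat_btwn hp.2.1
    exact ⟨q, hq1, hq2⟩
  choose f hf using hex
  have hinj : Function.Injective f := by
    rintro ⟨p, hp⟩ ⟨p', hp'⟩ h
    have h1 := hf ⟨p, hp⟩
    have h2 := hf ⟨p', hp'⟩
    rw [h] at h1
    obtain ⟨he1, he2⟩ := interval_eq hp'.2.2.1 hp'.2.2.2.1 hp.2.2.2.2 hp'.2.2.2.2
      hp.2.2.1 hp.2.2.2.1 h1 h2
    exact Subtype.ext (Prod.ext he1 he2)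
  exact hinj.countable

lemma image_mem_complArcs (hcl : IsClosed E) {a b : ℝ} (hab : a < b)
    (haE : a ∈ Apre E) (hbE : b ∈ Apre E) (hint : ∀ t ∈ Set.Ioo a b, t ∉ Apre E) :
    circleMap 0 1 '' Set.Ioo a b = connectedComponentIn (unitCircle \ E)
      (circleMap 0 1 ((a+b)/2)) ∧ circleMap 0 1 '' Set.Ioo a b ∈ complArcs E := by
  set U := circleMap 0 1 '' Set.Ioo a b with hU
  set x₀ := circleMap 0 1 ((a+b)/2) with hx₀def
  have hx₀U : x₀ ∈ U := ⟨(a+b)/2, ⟨by linarith, by linarith⟩, rfl⟩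
  have hUsub : U ⊆ unitCircle \ E := by
    rintro _ ⟨t, ht, rfl⟩
    exact ⟨cm_mem t, hint t ht⟩
  have hx₀ : x₀ ∈ unitCircle \ E := hUsub hx₀U
  set F := unitCircle \ E with hF
  set J := connectedComponentIn F x₀ with hJ
  have hUpc : IsPreconnected U :=
    (isPreconnected_Ioo).image _ (continuous_circleMap 0 1).continuousOn
  have hUJ : U ⊆ J := hUpc.subset_connectedComponentIn hx₀U hUsub
  obtain ⟨V, hVo, hVe'⟩ := arc_open a b
  have hVe : unitCircle ∩ V = U := by rw [hU]; exact hVe'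
  have hclU : closure U ⊆ U ∪ E := by
    have h1 : closure U ⊆ circleMap 0 1 '' Set.Icc a b :=
      closure_minimal (Set.image_mono Set.Ioo_subset_Icc_self)
        ((isCompact_Icc.image (continuous_circleMap 0 1)).isClosed)
    refine h1.trans ?_
    rintro _ ⟨t, ht, rfl⟩
    by_cases hta : t = a
    · right; rw [hta]; exact haE
    by_cases htb : t = b
    · right; rw [htb]; exact hbE
    · left
      exact ⟨t, ⟨lt_of_le_of_ne ht.1 (Ne.symm hta), lt_of_le_of_ne ht.2 htb⟩, rfl⟩
  have hJsub : J ⊆ F := connectedComponentIn_subset F x₀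
  have hJU : J ⊆ U := by
    by_contra hcon
    obtain ⟨y, hyJ, hyU⟩ := Set.not_subset.mp hcon
    have h2 : IsPreconnected J := isPreconnected_connectedComponentIn
    have hcover : J ⊆ V ∪ (closure U)ᶜ := by
      intro z hz
      by_cases hzc : z ∈ closure U
      · rcases hclU hzc with hzU | hzE
        · left
          rw [← hVe] at hzU
          exact hzU.2
        · exact absurd hzE (hJsub hz).2
      · right; exact hzc
    have hx₀V : x₀ ∈ V := by
      have := hx₀U
      rw [← hVe] at this
      exact this.2
    have hyc : y ∈ (closure U)ᶜ := by
      intro hy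
      rcases hclU hy with h | h
      · exact hyU h
      · exact (hJsub hyJ).2 h
    have key := h2 V (closure U)ᶜ hVo (isClosed_closure.isOpen_compl) hcover
      ⟨x₀, mem_connectedComponentIn hx₀, hx₀V⟩ ⟨y, hyJ, hyc⟩
    obtain ⟨z, hzJ, hzV, hzc⟩ := key
    have hzU : z ∈ U := by
      rw [← hVe]
      exact ⟨(hJsub hzJ).1, hzV⟩
    exact hzc (subset_closure hzU)
  have hUeq : U = J := subset_antisymm hUJ hJU
  exact ⟨hUeq, ⟨x₀, hx₀, hUeq⟩⟩

lemma image_inj {p q : ℝ × ℝ} (hp : p ∈ SC (Apre E)) (hq : q ∈ SC (Apre E))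
    (h : circleMap 0 1 '' Set.Ioo p.1 p.2 = circleMap 0 1 '' Set.Ioo q.1 q.2) : p = q := by
  have hpi := two_pi_pos
  set x := (p.1 + p.2)/2 with hxdef
  have hxp : x ∈ Set.Ioo p.1 p.2 := ⟨by have := hp.2.1; simp only [hxdef]; linarith,
    by have := hp.2.1; simp only [hxdef]; linarith⟩
  have hximg : circleMap 0 1 x ∈ circleMap 0 1 '' Set.Ioo q.1 q.2 := by
    rw [← h]; exact ⟨x, hxp, rfl⟩
  obtain ⟨y, hy, hyx⟩ := hximg
  obtain ⟨m, hm⟩ := cm_eq_iff.mp hyx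
  set n : ℤ := -m with hndef
  have hnm : (n:ℝ) = -(m:ℝ) := by push_cast [hndef]; ring
  have hxy : x ∈ Set.Ioo (q.1 + 2*Real.pi*n) (q.2 + 2*Real.pi*n) := by
    obtain ⟨hy1, hy2⟩ := hy
    rw [Set.mem_Ioo, hnm]
    constructor <;> linarith
  have hq1m : q.1 + 2*Real.pi*n ∈ Apre E := (A_per n q.1).mpr hq.2.2.1
  have hq2m : q.2 + 2*Real.pi*n ∈ Apre E := (A_per n q.2).mpr hq.2.2.2.1
  have hqI : ∀ t ∈ Set.Ioo (q.1 + 2*Real.pi*n) (q.2 + 2*Real.pi*n), t ∉ Apre E := by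
    rintro t ⟨ht1, ht2⟩ htA
    have h1 : t - 2*Real.pi*n ∈ Set.Ioo q.1 q.2 := ⟨by linarith, by linarith⟩
    have h2 : t - 2*Real.pi*n ∈ Apre E := by
      have h3 := (A_per (E := E) n (t - 2*Real.pi*n)).mp
      apply h3
      convert htA using 1
      ring
    exact hq.2.2.2.2 _ h1 h2
  obtain ⟨he1, he2⟩ := interval_eq hq1m hq2m hp.2.2.2.2 hqI hp.2.2.1 hp.2.2.2.1 hxp hxy
  have hm0 : n = 0 := by
    have h1 := hp.1.1
    have h2 := hp.1.2
    have h3 := hq.1.1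
    have h4 := hq.1.2
    have hm1 : (n:ℝ) < 1 := by nlinarith
    have hm2 : (-1:ℝ) < n := by nlinarith
    have hm1' : n < 1 := by exact_mod_cast hm1
    have hm2' : (-1:ℤ) < n := by exact_mod_cast hm2
    omega
  rw [hm0] at he1 he2
  push_cast at he1 he2
  exact Prod.ext (by linarith) (by linarith)
def ll (n : ℕ) : ℝ := 2*Real.pi/2^n

def cpt (n k : ℕ) : ℝ := 2*Real.pi*k/2^n

lemma ll_pos (n : ℕ) : 0 < ll n := by unfold ll; positivity

lemma cpt_nonneg (n k : ℕ) : 0 ≤ cpt n k := by unfold cpt; positivity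

lemma cpt_succ (n k : ℕ) : cpt n (k+1) = cpt n k + ll n := by
  unfold cpt ll
  push_cast
  ring

lemma cpt_le (n k : ℕ) (h : k + 1 ≤ 2^n) : cpt n (k+1) ≤ 2*Real.pi := by
  unfold cpt
  rw [div_le_iff₀ (by positivity)]
  have h1 : ((k:ℝ)+1) ≤ 2^n := by exact_mod_cast h
  push_cast
  nlinarith [Real.pi_pos]

lemma cpt_lt {n i j : ℕ} (h : cpt n i < cpt n j) : i < j := by
  unfold cpt at h
  have hq : (0:ℝ) < 2^n := by positivity
  rw [div_lt_div_iff_of_pos_right hq] at h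
  have h2 : (i:ℝ) < j := by
    have := (mul_lt_mul_iff_right₀ two_pi_pos).mp h
    exact this
  exact_mod_cast h2

lemma dyadicArc_eq (n k : ℕ) :
    dyadicArc n k = circleMap 0 1 '' Set.Ico (cpt n k) (cpt n (k+1)) := by
  unfold dyadicArc cpt
  congr 2
  push_cast
  ring

def KK (E : Set ℂ) (n : ℕ) : Finset (Fin (2^n)) :=
  Finset.univ.filter (fun k => (dyadicArc n (k:ℕ) ∩ E).Nonempty)

def cond (n k : ℕ) (p : ℝ × ℝ) : Prop :=
  p.1 ∈ Set.Ico (cpt n k) (cpt n (k+1)) ∨ p.2 ∈ Set.Ioc (cpt n k) (cpt n (k+1)) ∨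
  p.1 - 2*Real.pi ∈ Set.Ico (cpt n k) (cpt n (k+1)) ∨
  p.2 - 2*Real.pi ∈ Set.Ioc (cpt n k) (cpt n (k+1))

def hset (n k : ℕ) (p : ℝ × ℝ) : Set ℝ :=
  if cond n k p then
    (Set.Ioo p.1 p.2 ∪ Set.Ioo (p.1 - 2*Real.pi) (p.2 - 2*Real.pi)) ∩
      Set.Icc (cpt n k) (cpt n (k+1))
  else ∅

def ccv (n k : ℕ) (p : ℝ × ℝ) : ℝ≥0∞ :=
  if cond n k p then 2 * ENNReal.ofReal (min (p.2 - p.1) (ll n)) else 0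

lemma A_per_one (y : ℝ) : y + 2*Real.pi ∈ Apre E ↔ y ∈ Apre E := by
  have h := A_per (E := E) 1 y
  push_cast at h
  simpa using h

lemma cover_subset (hcl : IsClosed E) {n k : ℕ} (hk : k + 1 ≤ 2^n)
    {θ : ℝ} (hθmem : θ ∈ Set.Ico (cpt n k) (cpt n (k+1))) (hθA : θ ∈ Apre E) :
    Set.Icc (cpt n k) (cpt n (k+1)) \ Apre E ⊆ ⋃ p : SC (Apre E), hset n k p.1 := by
  have hpi := two_pi_pos
  rintro x ⟨hxI, hxA⟩
  have hne : (Apre E).Nonempty := ⟨θ, hθA⟩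
  obtain ⟨a', b', ha', hb', hax, hxb, hI'⟩ := exists_comp hcl hne hxA
  have hc1 : 0 ≤ cpt n k := cpt_nonneg n k
  have hc2 : cpt n (k+1) ≤ 2*Real.pi := cpt_le n k hk
  have hθx : θ ≠ x := fun h => hxA (h ▸ hθA)
  have hlen : b' ≤ a' + 2*Real.pi := by
    by_contra hcon
    push_neg at hcon
    exact hI' _ ⟨by linarith, hcon⟩ ((A_per_one a').mpr ha')
  obtain ⟨hxI1, hxI2⟩ := hxI
  obtain ⟨hθ1, hθ2⟩ := hθmem
  rcases lt_or_gt_of_ne hθx with hlt | hgt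
  · -- θ < x, left endpoint of the component lies in [c₁, c₂)
    have ha'θ : θ ≤ a' := by
      by_contra hcon
      push_neg at hcon
      exact hI' θ ⟨hcon, by linarith⟩ hθA
    have ha'mem : a' ∈ Set.Ico (cpt n k) (cpt n (k+1)) := ⟨hθ1.trans ha'θ, lt_of_lt_of_le hax hxI2⟩
    have hp : (a', b') ∈ SC (Apre E) :=
      ⟨⟨hc1.trans ha'mem.1, lt_of_lt_of_le ha'mem.2 hc2⟩, hax.trans hxb, ha', hb', hI'⟩
    refine Set.mem_iUnion.mpr ⟨⟨(a', b'), hp⟩, ?_⟩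
    have hcond : cond n k (a', b') := Or.inl ha'mem
    simp only [hset, if_pos hcond]
    exact ⟨Or.inl ⟨hax, hxb⟩, hxI1, hxI2⟩
  · -- x < θ, right endpoint of the component lies in (c₁, c₂]
    have hb'θ : b' ≤ θ := by
      by_contra hcon
      push_neg at hcon
      exact hI' θ ⟨by linarith, hcon⟩ hθA
    have hb'mem : b' ∈ Set.Ioc (cpt n k) (cpt n (k+1)) :=
      ⟨lt_of_le_of_lt hxI1 hxb, hb'θ.trans hθ2.le⟩
    rcases le_or_gt 0 a' with ha0 | ha0
    · have hp : (a', b') ∈ SC (Apre E) :=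
        ⟨⟨ha0, by linarith [hb'mem.2]⟩, hax.trans hxb, ha', hb', hI'⟩
      refine Set.mem_iUnion.mpr ⟨⟨(a', b'), hp⟩, ?_⟩
      have hcond : cond n k (a', b') := Or.inr (Or.inl hb'mem)
      simp only [hset, if_pos hcond]
      exact ⟨Or.inl ⟨hax, hxb⟩, hxI1, hxI2⟩
    · -- shift by one period
      have ha2 : a' + 2*Real.pi ∈ Apre E := (A_per_one a').mpr ha'
      have hb2 : b' + 2*Real.pi ∈ Apre E := (A_per_one b').mpr hb'
      have hI2 : ∀ t ∈ Set.Ioo (a' + 2*Real.pi) (b' + 2*Real.pi), t ∉ Apre E := by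
        rintro t ⟨ht1, ht2⟩ htA
        exact hI' (t - 2*Real.pi) ⟨by linarith, by linarith⟩
          (by rw [← A_per_one]; simpa using htA)
      have hb'pos : 0 < b' := lt_of_le_of_lt hc1 hb'mem.1
      have hp : (a' + 2*Real.pi, b' + 2*Real.pi) ∈ SC (Apre E) :=
        ⟨⟨show (0:ℝ) ≤ a' + 2*Real.pi by linarith,
          show a' + 2*Real.pi < 2*Real.pi by linarith⟩,
          show a' + 2*Real.pi < b' + 2*Real.pi by linarith, ha2, hb2, hI2⟩
      refine Set.mem_iUnion.mpr ⟨⟨(a' + 2*Real.pi, b' + 2*Real.pi), hp⟩, ?_⟩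
      have hcond : cond n k (a' + 2*Real.pi, b' + 2*Real.pi) := by
        right; right; right
        simpa using hb'mem
      simp only [hset, if_pos hcond]
      refine ⟨Or.inr ⟨show a' + 2*Real.pi - 2*Real.pi < x by linarith,
        show x < b' + 2*Real.pi - 2*Real.pi by linarith⟩, hxI1, hxI2⟩

lemma volume_Icc_cpt (n k : ℕ) :
    volume (Set.Icc (cpt n k) (cpt n (k+1))) = ENNReal.ofReal (ll n) := by
  rw [Real.volume_Icc, cpt_succ]
  ring_nf

lemma cover_bound (hcl : IsClosed E) (hnull : arcMeasure E = 0) {n k : ℕ} (hk : k + 1 ≤ 2^n)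
    {θ : ℝ} (hθmem : θ ∈ Set.Ico (cpt n k) (cpt n (k+1))) (hθA : θ ∈ Apre E) :
    ENNReal.ofReal (ll n) ≤ ∑' p : SC (Apre E), ccv n k p.1 := by
  haveI : Countable ↥(SC (Apre E)) := SC_countable _
  have hc1 : 0 ≤ cpt n k := cpt_nonneg n k
  have hc2 : cpt n (k+1) ≤ 2*Real.pi := cpt_le n k hk
  have hnullA : volume (Set.Icc (cpt n k) (cpt n (k+1)) ∩ Apre E) = 0 := by
    have h0 : volume ((Apre E ∩ Set.Ico 0 (2*Real.pi)) ∪ {2*Real.pi}) = 0 :=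
      measure_union_null (null_A hcl hnull) (measure_singleton _)
    apply measure_mono_null ?_ h0
    rintro t ⟨ht1, ht2⟩
    rcases eq_or_lt_of_le (ht1.2.trans hc2 : t ≤ 2*Real.pi) with h | h
    · right; exact h
    · left; exact ⟨ht2, ⟨hc1.trans ht1.1, h⟩⟩
  have hsplit := measure_inter_add_diff (μ := volume)
    (Set.Icc (cpt n k) (cpt n (k+1))) (A_closed hcl).measurableSet
  have hdiff : volume (Set.Icc (cpt n k) (cpt n (k+1)) \ Apre E) = ENNReal.ofReal (ll n) := by
    rw [← volume_Icc_cpt n k, ← hsplit, hnullA, zero_add]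
  rw [← hdiff]
  have hbnd : ∀ u v : ℝ, volume (Set.Ioo u v ∩ Set.Icc (cpt n k) (cpt n (k+1)))
      ≤ ENNReal.ofReal (min (v - u) (ll n)) := by
    intro u v
    rcases min_cases (v - u) (ll n) with ⟨hmin, _⟩ | ⟨hmin, _⟩ <;> rw [hmin]
    · calc volume (Set.Ioo u v ∩ Set.Icc (cpt n k) (cpt n (k+1)))
          ≤ volume (Set.Ioo u v) := measure_mono Set.inter_subset_left
        _ = ENNReal.ofReal (v - u) := Real.volume_Ioo
    · calc volume (Set.Ioo u v ∩ Set.Icc (cpt n k) (cpt n (k+1)))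
          ≤ volume (Set.Icc (cpt n k) (cpt n (k+1))) := measure_mono Set.inter_subset_right
        _ = ENNReal.ofReal (ll n) := volume_Icc_cpt n k
  calc volume (Set.Icc (cpt n k) (cpt n (k+1)) \ Apre E)
      ≤ volume (⋃ p : SC (Apre E), hset n k p.1) :=
        measure_mono (cover_subset hcl hk hθmem hθA)
    _ ≤ ∑' p : SC (Apre E), volume (hset n k p.1) := measure_iUnion_le _
    _ ≤ ∑' p : SC (Apre E), ccv n k p.1 := by
        apply Summable.tsum_le_tsum ?_ ENNReal.summable ENNReal.summable
        rintro ⟨p, hp⟩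
        by_cases hc : cond n k p
        · simp only [hset, ccv, if_pos hc]
          rw [Set.union_inter_distrib_right]
          refine le_trans (measure_union_le _ _) ?_
          rw [two_mul (ENNReal.ofReal (min (p.2 - p.1) (ll n)))]
          apply add_le_add
          · exact hbnd p.1 p.2
          · have h := hbnd (p.1 - 2*Real.pi) (p.2 - 2*Real.pi)
            rw [show p.2 - 2*Real.pi - (p.1 - 2*Real.pi) = p.2 - p.1 by ring] at h
            exact h
        · simp only [hset, ccv, if_neg hc]
          simp

lemma sum_ccv_le (n : ℕ) (p : ℝ × ℝ) :
    ∑ k : Fin (2^n), ccv n (k:ℕ) p ≤ 8 * ENNReal.ofReal (min (p.2 - p.1) (ll n)) := by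
  set v := ENNReal.ofReal (min (p.2 - p.1) (ll n)) with hv
  have keyIco : ∀ x : ℝ,
      (∑ k : Fin (2^n), if x ∈ Set.Ico (cpt n k) (cpt n (k+1)) then v else 0) ≤ v := by
    intro x
    rw [← Finset.sum_filter]
    have hcard : (Finset.univ.filter
        (fun k : Fin (2^n) => x ∈ Set.Ico (cpt n (k:ℕ)) (cpt n ((k:ℕ)+1)))).card ≤ 1 := by
      rw [Finset.card_le_one]
      intro a ha b hb
      simp only [Finset.mem_filter] at ha hb
      have e1 : (a:ℕ) < (b:ℕ)+1 := cpt_lt (lt_of_le_of_lt ha.2.1 hb.2.2)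
      have e2 : (b:ℕ) < (a:ℕ)+1 := cpt_lt (lt_of_le_of_lt hb.2.1 ha.2.2)
      have : (a:ℕ) = (b:ℕ) := by omega
      exact Fin.ext this
    rw [Finset.sum_const]
    rcases Nat.le_one_iff_eq_zero_or_eq_one.mp hcard with h | h <;> rw [h] <;> simp
  have keyIoc : ∀ x : ℝ,
      (∑ k : Fin (2^n), if x ∈ Set.Ioc (cpt n k) (cpt n (k+1)) then v else 0) ≤ v := by
    intro x
    rw [← Finset.sum_filter]
    have hcard : (Finset.univ.filter
        (fun k : Fin (2^n) => x ∈ Set.Ioc (cpt n (k:ℕ)) (cpt n ((k:ℕ)+1)))).card ≤ 1 := by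
      rw [Finset.card_le_one]
      intro a ha b hb
      simp only [Finset.mem_filter] at ha hb
      have e1 : (a:ℕ) < (b:ℕ)+1 := cpt_lt (lt_of_lt_of_le ha.2.1 hb.2.2)
      have e2 : (b:ℕ) < (a:ℕ)+1 := cpt_lt (lt_of_lt_of_le hb.2.1 ha.2.2)
      have : (a:ℕ) = (b:ℕ) := by omega
      exact Fin.ext this
    rw [Finset.sum_const]
    rcases Nat.le_one_iff_eq_zero_or_eq_one.mp hcard with h | h <;> rw [h] <;> simp
  have hptw : ∀ k : Fin (2^n), ccv n (k:ℕ) p ≤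
      2 * ((if p.1 ∈ Set.Ico (cpt n k) (cpt n (k+1)) then v else 0)
        + (if p.2 ∈ Set.Ioc (cpt n k) (cpt n (k+1)) then v else 0)
        + (if p.1 - 2*Real.pi ∈ Set.Ico (cpt n k) (cpt n (k+1)) then v else 0)
        + (if p.2 - 2*Real.pi ∈ Set.Ioc (cpt n k) (cpt n (k+1)) then v else 0)) := by
    intro k
    unfold ccv
    by_cases hc : cond n (k:ℕ) p
    · rw [if_pos hc]
      apply mul_le_mul_right
      rcases hc with h | h | h | h
      · rw [if_pos h]
        exact le_self_add.trans (le_self_add.trans le_self_add)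
      · rw [if_pos h]
        exact le_add_self.trans (le_self_add.trans le_self_add)
      · rw [if_pos h]
        exact le_add_self.trans le_self_add
      · rw [if_pos h]
        exact le_add_self
    · rw [if_neg hc]
      exact zero_le
  calc ∑ k : Fin (2^n), ccv n (k:ℕ) p
      ≤ ∑ k : Fin (2^n), 2 * ((if p.1 ∈ Set.Ico (cpt n k) (cpt n (k+1)) then v else 0)
        + (if p.2 ∈ Set.Ioc (cpt n k) (cpt n (k+1)) then v else 0)
        + (if p.1 - 2*Real.pi ∈ Set.Ico (cpt n k) (cpt n (k+1)) then v else 0)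
        + (if p.2 - 2*Real.pi ∈ Set.Ioc (cpt n k) (cpt n (k+1)) then v else 0)) :=
        Finset.sum_le_sum (fun k _ => hptw k)
    _ = 2 * ((∑ k : Fin (2^n), if p.1 ∈ Set.Ico (cpt n k) (cpt n (k+1)) then v else 0)
        + (∑ k : Fin (2^n), if p.2 ∈ Set.Ioc (cpt n k) (cpt n (k+1)) then v else 0)
        + (∑ k : Fin (2^n), if p.1 - 2*Real.pi ∈ Set.Ico (cpt n k) (cpt n (k+1)) then v else 0)
        + (∑ k : Fin (2^n), if p.2 - 2*Real.pi ∈ Set.Ioc (cpt n k) (cpt n (k+1)) then v else 0)) := by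
        rw [← Finset.mul_sum]
        congr 1
        rw [← Finset.sum_add_distrib, ← Finset.sum_add_distrib, ← Finset.sum_add_distrib]
    _ ≤ 2 * (v + v + v + v) := by
        apply mul_le_mul_right
        exact add_le_add (add_le_add (add_le_add (keyIco p.1) (keyIoc p.2))
          (keyIco (p.1 - 2*Real.pi))) (keyIoc (p.2 - 2*Real.pi))
    _ = 8 * v := by ring
def Cg (α : ℝ) : ℝ≥0∞ :=
  (1 - ENNReal.ofReal ((1/2:ℝ)^α))⁻¹ + (1 - ENNReal.ofReal ((2:ℝ)^(α-1)))⁻¹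

lemma r1_lt_one {α : ℝ} (hα : α ∈ Set.Ioo (0:ℝ) 1) : (1/2:ℝ)^α < 1 :=
  Real.rpow_lt_one (by norm_num) (by norm_num) hα.1

lemma r2_lt_one {α : ℝ} (hα : α ∈ Set.Ioo (0:ℝ) 1) : (2:ℝ)^(α-1) < 1 :=
  Real.rpow_lt_one_of_one_lt_of_neg one_lt_two (by linarith [hα.2])

lemma inv_one_sub_ne_top {x : ℝ≥0∞} (h : x < 1) : (1 - x)⁻¹ ≠ ⊤ := by
  rw [Ne, ENNReal.inv_eq_top]
  intro hc
  rw [tsub_eq_zero_iff_le] at hc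
  exact absurd hc (not_le.mpr h)

lemma Cg_ne_top {α : ℝ} (hα : α ∈ Set.Ioo (0:ℝ) 1) : Cg α ≠ ⊤ := by
  unfold Cg
  apply ENNReal.add_ne_top.mpr
  exact ⟨inv_one_sub_ne_top (ENNReal.ofReal_lt_one.mpr (r1_lt_one hα)),
    inv_one_sub_ne_top (ENNReal.ofReal_lt_one.mpr (r2_lt_one hα))⟩

lemma ll_add (n m : ℕ) : ll (n + m) = ll n * (1/2)^m := by
  unfold ll
  rw [pow_add]
  field_simp
  rw [← mul_pow]; norm_num

lemma geom_bound {α : ℝ} (hα : α ∈ Set.Ioo (0:ℝ) 1) {L : ℝ} (hL : 0 < L) :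
    ∑' n : ℕ, ENNReal.ofReal (ll n ^ (α-1)) * ENNReal.ofReal (min L (ll n))
      ≤ ENNReal.ofReal (L^α) * Cg α := by
  obtain ⟨hα0, hα1⟩ := hα
  have hex : ∃ n : ℕ, ll n ≤ L := by
    obtain ⟨n, hn⟩ := pow_unbounded_of_one_lt (2*Real.pi/L) one_lt_two
    refine ⟨n, ?_⟩
    unfold ll
    rw [div_le_iff₀ (by positivity)]
    have h2 := (div_lt_iff₀ hL).mp hn
    nlinarith
  set n₀ := Nat.find hex with hn₀
  have hn₀le : ll n₀ ≤ L := Nat.find_spec hex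
  set f : ℕ → ℝ≥0∞ :=
    fun n => ENNReal.ofReal (ll n ^ (α-1)) * ENNReal.ofReal (min L (ll n)) with hf
  have htail : ∀ m : ℕ,
      f (m + n₀) ≤ ENNReal.ofReal (L^α) * (ENNReal.ofReal ((1/2:ℝ)^α))^m := by
    intro m
    have hllpos := ll_pos (m + n₀)
    have h1 : f (m + n₀) ≤ ENNReal.ofReal (ll (m+n₀) ^ α) := by
      rw [hf]
      simp only
      rw [← ENNReal.ofReal_mul (Real.rpow_nonneg hllpos.le _)]
      apply ENNReal.ofReal_le_ofReal
      calc ll (m+n₀)^(α-1) * min L (ll (m+n₀))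
          ≤ ll (m+n₀)^(α-1) * ll (m+n₀) :=
            mul_le_mul_of_nonneg_left (min_le_right _ _) (Real.rpow_nonneg hllpos.le _)
        _ = ll (m+n₀)^α := by
            nth_rewrite 2 [← Real.rpow_one (ll (m+n₀))]
            rw [← Real.rpow_add hllpos]
            norm_num
    have h2 : ll (m+n₀) ≤ L * (1/2)^m := by
      rw [show m + n₀ = n₀ + m from Nat.add_comm m n₀, ll_add]
      exact mul_le_mul_of_nonneg_right hn₀le (by positivity)
    have h3 : ll (m+n₀)^α ≤ (L*(1/2)^m)^α := Real.rpow_le_rpow hllpos.le h2 hα0.le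
    have h4 : (L*(1/2:ℝ)^m)^α = L^α * ((1/2:ℝ)^α)^m := by
      rw [Real.mul_rpow hL.le (by positivity)]
      congr 1
      rw [← Real.rpow_natCast (1/2:ℝ) m, ← Real.rpow_natCast ((1/2:ℝ)^α) m,
        ← Real.rpow_mul (by norm_num), ← Real.rpow_mul (by norm_num), mul_comm]
    calc f (m+n₀) ≤ ENNReal.ofReal (ll (m+n₀)^α) := h1
      _ ≤ ENNReal.ofReal (L^α * ((1/2:ℝ)^α)^m) := ENNReal.ofReal_le_ofReal (h4 ▸ h3)
      _ = ENNReal.ofReal (L^α) * (ENNReal.ofReal ((1/2:ℝ)^α))^m := by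
          rw [ENNReal.ofReal_mul (Real.rpow_nonneg hL.le _),
            ENNReal.ofReal_pow (Real.rpow_nonneg (by norm_num) _)]
  have hhead : ∀ i, i < n₀ →
      f i ≤ ENNReal.ofReal (L^α) * (ENNReal.ofReal ((2:ℝ)^(α-1)))^(n₀ - 1 - i) := by
    intro i hi
    have hLlt : L < ll i := by
      have h := Nat.find_min hex hi
      push_neg at h
      exact h
    set j := n₀ - 1 - i with hjdef
    have hij : i + j = n₀ - 1 := by omega
    have hll_i : ll i = ll (n₀ - 1) * 2^j := by
      have h := ll_add i j
      rw [hij] at h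
      rw [h, one_div, inv_pow]
      field_simp
    have hl2 : L < ll (n₀ - 1) := by
      have h := Nat.find_min hex (show n₀ - 1 < n₀ by omega)
      push_neg at h
      exact h
    have hlb : L * 2^j < ll i := by
      rw [hll_i]
      exact mul_lt_mul_of_pos_right hl2 (by positivity)
    have h5 : ll i ^ (α-1) ≤ (L * 2^j)^(α-1) :=
      Real.rpow_le_rpow_of_nonpos (by positivity) hlb.le (by linarith)
    have h6 : min L (ll i) = L := min_eq_left hLlt.le
    have hLpow : L^(α-1) * L = L^α := by
      nth_rewrite 2 [← Real.rpow_one L]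
      rw [← Real.rpow_add hL]
      norm_num
    have h7 : (L*(2:ℝ)^j)^(α-1) * L = L^α * ((2:ℝ)^(α-1))^j := by
      rw [Real.mul_rpow hL.le (by positivity)]
      rw [← Real.rpow_natCast (2:ℝ) j, ← Real.rpow_mul (by norm_num),
        mul_comm (j:ℝ) (α-1), Real.rpow_mul (by norm_num), Real.rpow_natCast]
      rw [mul_right_comm, hLpow]
    rw [hf]
    simp only
    rw [h6, ← ENNReal.ofReal_mul (Real.rpow_nonneg (ll_pos i).le _)]
    calc ENNReal.ofReal (ll i ^(α-1) * L)
        ≤ ENNReal.ofReal ((L*2^j)^(α-1) * L) :=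
          ENNReal.ofReal_le_ofReal (mul_le_mul_of_nonneg_right h5 hL.le)
      _ = ENNReal.ofReal (L^α * ((2:ℝ)^(α-1))^j) := by rw [h7]
      _ = ENNReal.ofReal (L^α) * (ENNReal.ofReal ((2:ℝ)^(α-1)))^j := by
          rw [ENNReal.ofReal_mul (Real.rpow_nonneg hL.le _),
            ENNReal.ofReal_pow (Real.rpow_nonneg (by norm_num) _)]
  have hsplit := Summable.sum_add_tsum_nat_add' (f := f) (k := n₀) ENNReal.summable
  rw [← hsplit]
  have hA : ∑' m, f (m + n₀) ≤ ENNReal.ofReal (L^α) * (1 - ENNReal.ofReal ((1/2:ℝ)^α))⁻¹ := by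
    calc ∑' m, f (m+n₀) ≤ ∑' m, ENNReal.ofReal (L^α) * (ENNReal.ofReal ((1/2:ℝ)^α))^m :=
          Summable.tsum_le_tsum htail ENNReal.summable ENNReal.summable
      _ = ENNReal.ofReal (L^α) * ∑' m, (ENNReal.ofReal ((1/2:ℝ)^α))^m := ENNReal.tsum_mul_left
      _ = _ := by rw [ENNReal.tsum_geometric]
  have hB : ∑ i ∈ Finset.range n₀, f i
      ≤ ENNReal.ofReal (L^α) * (1 - ENNReal.ofReal ((2:ℝ)^(α-1)))⁻¹ := by
    calc ∑ i ∈ Finset.range n₀, f i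
        ≤ ∑ i ∈ Finset.range n₀,
            ENNReal.ofReal (L^α) * (ENNReal.ofReal ((2:ℝ)^(α-1)))^(n₀-1-i) :=
          Finset.sum_le_sum (fun i hi => hhead i (Finset.mem_range.mp hi))
      _ = ∑ j ∈ Finset.range n₀, ENNReal.ofReal (L^α) * (ENNReal.ofReal ((2:ℝ)^(α-1)))^j :=
          Finset.sum_range_reflect (fun j => ENNReal.ofReal (L^α) * (ENNReal.ofReal ((2:ℝ)^(α-1)))^j) n₀
      _ = ENNReal.ofReal (L^α) * ∑ j ∈ Finset.range n₀, (ENNReal.ofReal ((2:ℝ)^(α-1)))^j := by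
          rw [Finset.mul_sum]
      _ ≤ ENNReal.ofReal (L^α) * ∑' j, (ENNReal.ofReal ((2:ℝ)^(α-1)))^j :=
          mul_le_mul_right (ENNReal.sum_le_tsum _) _
      _ = _ := by rw [ENNReal.tsum_geometric]
  calc (∑ i ∈ Finset.range n₀, f i) + ∑' m, f (m + n₀)
      ≤ ENNReal.ofReal (L^α) * (1 - ENNReal.ofReal ((2:ℝ)^(α-1)))⁻¹
        + ENNReal.ofReal (L^α) * (1 - ENNReal.ofReal ((1/2:ℝ)^α))⁻¹ := add_le_add hB hA
    _ = ENNReal.ofReal (L^α) * Cg α := by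
        rw [Cg, mul_add]
        ring
lemma cpt_eq (n k : ℕ) : cpt n k = k * ll n := by
  unfold cpt ll
  ring

lemma rpow_split (n : ℕ) (α : ℝ) :
    ENNReal.ofReal (ll n ^ α)
      = ENNReal.ofReal (ll n ^ (α-1)) * ENNReal.ofReal (ll n) := by
  rw [← ENNReal.ofReal_mul (Real.rpow_nonneg (ll_pos n).le _)]
  congr 1
  nth_rewrite 3 [← Real.rpow_one (ll n)]
  rw [← Real.rpow_add (ll_pos n)]
  norm_num

lemma KK_mem {n : ℕ} {k : Fin (2^n)} (hk : k ∈ KK E n) :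
    ∃ θ ∈ Set.Ico (cpt n (k:ℕ)) (cpt n ((k:ℕ)+1)), θ ∈ Apre E := by
  rw [KK, Finset.mem_filter] at hk
  obtain ⟨z, hz1, hz2⟩ := hk.2
  rw [dyadicArc_eq] at hz1
  obtain ⟨θ, hθ, rfl⟩ := hz1
  exact ⟨θ, hθ, hz2⟩

lemma arcLen_nonneg (A : Set ℂ) : 0 ≤ arcLen A := ENNReal.toReal_nonneg

lemma counting {α : ℝ} (hα : α ∈ Set.Ioo (0:ℝ) 1) {E : Set ℂ} (hcl : IsClosed E)
    (hnull : arcMeasure E = 0)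
    (hsum : Summable (fun J : complArcs E => arcLen (J : Set ℂ) ^ α)) :
    ∑' n : ℕ, ∑ k ∈ KK E n, ENNReal.ofReal (ll n ^ α) ≠ ⊤ := by
  haveI : Countable ↥(SC (Apre E)) := SC_countable _
  have hS : ∑' J : complArcs E, ENNReal.ofReal (arcLen (J : Set ℂ) ^ α) ≠ ⊤ := by
    rw [← ENNReal.ofReal_tsum_of_nonneg (fun J => Real.rpow_nonneg (arcLen_nonneg _) α) hsum]
    exact ENNReal.ofReal_ne_top
  have himg : ∀ p : ℝ × ℝ, p ∈ SC (Apre E) →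
      circleMap 0 1 '' Set.Ioo p.1 p.2 ∈ complArcs E :=
    fun p hp => (image_mem_complArcs hcl hp.2.1 hp.2.2.1 hp.2.2.2.1 hp.2.2.2.2).2
  set φ : ↥(SC (Apre E)) → ↥(complArcs E) :=
    fun p => ⟨circleMap 0 1 '' Set.Ioo p.1.1 p.1.2, himg p.1 p.2⟩ with hφ
  have hφinj : Function.Injective φ := by
    rintro ⟨p, hp⟩ ⟨q, hq⟩ h
    have h2 := congrArg Subtype.val h
    exact Subtype.ext (image_inj hp hq h2)
  have hlen : ∀ p : ↥(SC (Apre E)), arcLen ((φ p : Set ℂ)) = p.1.2 - p.1.1 := by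
    rintro ⟨p, hp⟩
    exact arcLen_image hp.1.1 hp.1.2 hp.2.1 (SC_len_le hp)
  have step1 : ∀ n : ℕ, (∑ k ∈ KK E n, ENNReal.ofReal (ll n ^ α))
      ≤ ∑' p : SC (Apre E), ∑ k ∈ KK E n,
          ENNReal.ofReal (ll n ^ (α-1)) * ccv n (k:ℕ) p.1 := by
    intro n
    rw [Summable.tsum_finsetSum (fun _ _ => ENNReal.summable)]
    apply Finset.sum_le_sum
    intro k hk
    obtain ⟨θ, hθmem, hθA⟩ := KK_mem hk
    rw [rpow_split n α, ENNReal.tsum_mul_left]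
    exact mul_le_mul_right (cover_bound hcl hnull k.isLt hθmem hθA) _
  have step2 : ∀ (p : ↥(SC (Apre E))) (n : ℕ),
      (∑ k ∈ KK E n, ENNReal.ofReal (ll n ^ (α-1)) * ccv n (k:ℕ) p.1)
        ≤ 8 * (ENNReal.ofReal (ll n ^ (α-1)) * ENNReal.ofReal (min (p.1.2 - p.1.1) (ll n))) := by
    intro p n
    calc (∑ k ∈ KK E n, ENNReal.ofReal (ll n ^ (α-1)) * ccv n (k:ℕ) p.1)
        ≤ ∑ k : Fin (2^n), ENNReal.ofReal (ll n ^ (α-1)) * ccv n (k:ℕ) p.1 :=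
          Finset.sum_le_sum_of_subset (Finset.subset_univ _)
      _ = ENNReal.ofReal (ll n ^ (α-1)) * ∑ k : Fin (2^n), ccv n (k:ℕ) p.1 := by
          rw [Finset.mul_sum]
      _ ≤ ENNReal.ofReal (ll n ^ (α-1)) * (8 * ENNReal.ofReal (min (p.1.2 - p.1.1) (ll n))) :=
          mul_le_mul_right (sum_ccv_le n p.1) _
      _ = 8 * (ENNReal.ofReal (ll n ^ (α-1)) * ENNReal.ofReal (min (p.1.2 - p.1.1) (ll n))) := by
          ring
  have step3 : ∀ p : ↥(SC (Apre E)),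
      (∑' n : ℕ, ENNReal.ofReal (ll n ^ (α-1)) * ENNReal.ofReal (min (p.1.2 - p.1.1) (ll n)))
        ≤ ENNReal.ofReal ((p.1.2 - p.1.1) ^ α) * Cg α :=
    fun p => geom_bound hα (sub_pos.mpr p.2.2.1)
  have hmain : (∑' n : ℕ, ∑ k ∈ KK E n, ENNReal.ofReal (ll n ^ α))
      ≤ 8 * Cg α * ∑' J : complArcs E, ENNReal.ofReal (arcLen (J : Set ℂ) ^ α) := by
    calc (∑' n : ℕ, ∑ k ∈ KK E n, ENNReal.ofReal (ll n ^ α))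
        ≤ ∑' (n : ℕ) (p : SC (Apre E)), ∑ k ∈ KK E n,
            ENNReal.ofReal (ll n ^ (α-1)) * ccv n (k:ℕ) p.1 :=
          Summable.tsum_le_tsum step1 ENNReal.summable ENNReal.summable
      _ = ∑' (p : SC (Apre E)) (n : ℕ), ∑ k ∈ KK E n,
            ENNReal.ofReal (ll n ^ (α-1)) * ccv n (k:ℕ) p.1 := ENNReal.tsum_comm
      _ ≤ ∑' (p : SC (Apre E)) (n : ℕ),
            8 * (ENNReal.ofReal (ll n ^ (α-1)) * ENNReal.ofReal (min (p.1.2 - p.1.1) (ll n))) :=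
          Summable.tsum_le_tsum (fun p => Summable.tsum_le_tsum (step2 p) ENNReal.summable ENNReal.summable)
            ENNReal.summable ENNReal.summable
      _ = ∑' p : SC (Apre E), 8 * ∑' n : ℕ,
            ENNReal.ofReal (ll n ^ (α-1)) * ENNReal.ofReal (min (p.1.2 - p.1.1) (ll n)) := by
          apply tsum_congr
          intro p
          rw [ENNReal.tsum_mul_left]
      _ ≤ ∑' p : SC (Apre E), 8 * (ENNReal.ofReal ((p.1.2 - p.1.1) ^ α) * Cg α) :=
          Summable.tsum_le_tsum (fun p => mul_le_mul_right (step3 p) _)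
            ENNReal.summable ENNReal.summable
      _ = 8 * Cg α * ∑' p : SC (Apre E), ENNReal.ofReal ((p.1.2 - p.1.1) ^ α) := by
          rw [← ENNReal.tsum_mul_left]
          apply tsum_congr
          intro p
          ring
      _ = 8 * Cg α * ∑' p : SC (Apre E), ENNReal.ofReal (arcLen ((φ p : Set ℂ)) ^ α) := by
          congr 1
          apply tsum_congr
          intro p
          rw [hlen p]
      _ ≤ 8 * Cg α * ∑' J : complArcs E, ENNReal.ofReal (arcLen (J : Set ℂ) ^ α) :=
          mul_le_mul_right
            (ENNReal.tsum_comp_le_tsum_of_injective hφinj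
              (fun J => ENNReal.ofReal (arcLen (J : Set ℂ) ^ α))) _
  exact ne_top_of_le_ne_top
    (ENNReal.mul_ne_top (ENNReal.mul_ne_top (by norm_num) (Cg_ne_top hα)) hS) hmain

end
end S9

end

/-- converse to the Roberts decomposition, power gauge: if for some `C > 0` and
every offset `j₀` the measure `μ` decomposes as `μ = Σ_{j≥1} μ_j` with `μ_j(I) ≤ C·|I|^α` for
every dyadic arc `I` of generation `j + j₀`, then `μ` does not charge `α`-Beurling–Carleson
sets. (Here `mus j` plays the role of `μ_{j+1}`.) -/
theorem stmt9 (α : ℝ) (hα : α ∈ Set.Ioo (0:ℝ) 1)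
    (mu : Measure ℂ) [IsFiniteMeasure mu] (hcirc : mu unitCircleᶜ = 0)
    (C : ℝ) (hC : 0 < C)
    (hdec : ∀ j₀ : ℕ, ∃ mus : ℕ → Measure ℂ, mu = Measure.sum mus ∧
      ∀ j : ℕ, ∀ k : Fin (2 ^ (j + 1 + j₀)),
        mus j (dyadicArc (j + 1 + j₀) (k : ℕ)) ≤
          ENNReal.ofReal (C * (2 * Real.pi / 2 ^ (j + 1 + j₀)) ^ α)) :
    ∀ E : Set ℂ, IsAlphaBeurlingCarleson α E → mu E = 0 := by
  classical
  intro E hE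
  obtain ⟨hcl, hsub, hnull, hsum⟩ := hE
  have hmeasE : MeasurableSet E := hcl.measurableSet
  have hT := S9.counting hα hcl hnull hsum
  set f : ℕ → ℝ≥0∞ := fun n => ∑ k ∈ S9.KK E n, ENNReal.ofReal (S9.ll n ^ α) with hf
  have htail := ENNReal.tendsto_sum_nat_add f hT
  have hcover : ∀ n : ℕ, E ⊆ ⋃ k ∈ S9.KK E n, dyadicArc n (k:ℕ) := by
    intro n x hx
    obtain ⟨θ, hθmem, hθeq⟩ := S9.exists_arg (hsub hx)
    have hlpos := S9.ll_pos n
    set k₀ : ℕ := Nat.floor (θ / S9.ll n) with hk₀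
    have hll2 : S9.ll n * 2^n = 2*Real.pi := by
      unfold S9.ll
      field_simp
    have hθll : θ / S9.ll n < 2^n := by
      rw [div_lt_iff₀ hlpos]
      rw [mul_comm, hll2]
      exact hθmem.2
    have hk₀lt : k₀ < 2^n := by
      rw [hk₀, Nat.floor_lt (div_nonneg hθmem.1 hlpos.le)]
      exact_mod_cast hθll
    have hmem : θ ∈ Set.Ico (S9.cpt n k₀) (S9.cpt n (k₀+1)) := by
      constructor
      · rw [S9.cpt_eq]
        have h1 : (k₀:ℝ) ≤ θ / S9.ll n := Nat.floor_le (div_nonneg hθmem.1 hlpos.le)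
        calc (k₀:ℝ) * S9.ll n ≤ (θ / S9.ll n) * S9.ll n :=
              mul_le_mul_of_nonneg_right h1 hlpos.le
          _ = θ := by field_simp
      · rw [S9.cpt_eq]
        have h1 : θ / S9.ll n < (k₀:ℝ) + 1 := Nat.lt_floor_add_one _
        have h2 : θ < ((k₀:ℝ) + 1) * S9.ll n := by
          rw [← div_lt_iff₀ hlpos]
          exact h1
        calc θ < ((k₀:ℝ)+1) * S9.ll n := h2
          _ = (↑(k₀+1) : ℝ) * S9.ll n := by push_cast; ring
    set kF : Fin (2^n) := ⟨k₀, hk₀lt⟩ with hkF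
    have hxarc : x ∈ dyadicArc n k₀ := by
      rw [S9.dyadicArc_eq]
      exact ⟨θ, hmem, hθeq⟩
    have hKK : kF ∈ S9.KK E n := by
      rw [S9.KK, Finset.mem_filter]
      exact ⟨Finset.mem_univ _, ⟨x, hxarc, hx⟩⟩
    exact Set.mem_biUnion hKK hxarc
  have hbound : ∀ j₀ : ℕ, mu E ≤ ENNReal.ofReal C * ∑' j, f (j + (1 + j₀)) := by
    intro j₀
    obtain ⟨mus, hmusum, hmub⟩ := hdec j₀
    have hperj : ∀ j : ℕ, mus j E ≤ ENNReal.ofReal C * f (j + (1 + j₀)) := by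
      intro j
      have hidx : j + (1 + j₀) = j + 1 + j₀ := by omega
      rw [hidx]
      set n := j + 1 + j₀ with hn
      calc mus j E ≤ mus j (⋃ k ∈ S9.KK E n, dyadicArc n (k:ℕ)) :=
            measure_mono (hcover n)
        _ ≤ ∑ k ∈ S9.KK E n, mus j (dyadicArc n (k:ℕ)) := measure_biUnion_finset_le _ _
        _ ≤ ∑ k ∈ S9.KK E n, ENNReal.ofReal (C * S9.ll n ^ α) :=
            Finset.sum_le_sum (fun k _ => hmub j k)
        _ = ∑ k ∈ S9.KK E n, ENNReal.ofReal C * ENNReal.ofReal (S9.ll n ^ α) := by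
            apply Finset.sum_congr rfl
            intro k _
            rw [ENNReal.ofReal_mul hC.le]
        _ = ENNReal.ofReal C * f n := by
            rw [hf, ← Finset.mul_sum]
    calc mu E = ∑' j, mus j E := by
          conv_lhs => rw [hmusum]
          rw [Measure.sum_apply _ hmeasE]
      _ ≤ ∑' j, ENNReal.ofReal C * f (j + (1 + j₀)) :=
          Summable.tsum_le_tsum hperj ENNReal.summable ENNReal.summable
      _ = ENNReal.ofReal C * ∑' j, f (j + (1 + j₀)) := ENNReal.tsum_mul_left
  have hlim : Filter.Tendsto (fun i => ENNReal.ofReal C * ∑' k, f (k + i))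
      Filter.atTop (nhds 0) := by
    have h := ENNReal.Tendsto.const_mul (a := ENNReal.ofReal C) htail (Or.inr ENNReal.ofReal_ne_top)
    simpa using h
  have hev : ∀ᶠ i in Filter.atTop, mu E ≤ ENNReal.ofReal C * ∑' k, f (k + i) := by
    rw [Filter.eventually_atTop]
    refine ⟨1, fun i hi => ?_⟩
    obtain ⟨j₀, rfl⟩ : ∃ j₀, i = 1 + j₀ := ⟨i - 1, by omega⟩
    exact hbound j₀
  have hle : mu E ≤ 0 := ge_of_tendsto hlim hev
  exact le_antisymm hle (zero_le)
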